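/- For every complex t with |t| < 2−√3, 6·|a₁(t)| + 20·|a₃(t)| + 6·|a₅(t)| ≤ r(|t|), where r(x) = 2x(3−x²)(1−3x²)/((1−x²)(1−14x²+x⁴)) for 0 ≤ x < 2−√3. (Each |a_i(t)| is maximal, for given |t|, when t is purely imaginary, and at t = i x the three contributions have the same phase.) -/

import Mathlib

set_option maxHeartbeats 1000000


open scoped BigOperators

/-- Coefficient `a₁(t)` for complex `t`. -/
noncomputable def a1C (t : ℂ) : ℂ :=
  t * (1 + 16 * t ^ 2 + 46 * t ^ 4 + 16 * t ^ 6 + t ^ 8) /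
    ((1 + t ^ 2) * (1 + 6 * t ^ 2 + t ^ 4) * (1 + 14 * t ^ 2 + t ^ 4))

/-- Coefficient `a₃(t)` for complex `t`. -/
noncomputable def a3C (t : ℂ) : ℂ :=
  -2 * t ^ 3 / ((1 + t ^ 2) * (1 + 14 * t ^ 2 + t ^ 4))

/-- Coefficient `a₅(t)` for complex `t`. -/
noncomputable def a5C (t : ℂ) : ℂ :=
  16 * t ^ 5 / ((1 + t ^ 2) * (1 + 6 * t ^ 2 + t ^ 4) * (1 + 14 * t ^ 2 + t ^ 4))

/-- The bound `r(x) = 2x(3−x²)(1−3x²)/((1−x²)(1−14x²+x⁴))`. -/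
noncomputable def rFun (x : ℝ) : ℝ :=
  2 * x * (3 - x ^ 2) * (1 - 3 * x ^ 2) / ((1 - x ^ 2) * (1 - 14 * x ^ 2 + x ^ 4))


lemma pair2p (s u : ℂ) (hs : s^2 = 2) (h1 : 1+(3+2*s)*u^2 ≠ 0) (h2 : 1+(3-2*s)*u^2 ≠ 0) :
    (1/4+s/8)/(1+(3+2*s)*u^2) + (1/4-s/8)/(1+(3-2*s)*u^2) = 1/2*(1+u^2)/(1+6*u^2+u^4) := by
  have hd : (1+(3+2*s)*u^2)*(1+(3-2*s)*u^2) = 1+6*u^2+u^4 := by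
    linear_combination (-4*u^4)*hs
  rw [div_add_div _ _ h1 h2, hd]
  congr 1
  linear_combination (-u^2/2)*hs

lemma pair3p (s u : ℂ) (hs : s^2 = 3) (h1 : 1+(7+4*s)*u^2 ≠ 0) (h2 : 1+(7-4*s)*u^2 ≠ 0) :
    (1/12+s/24)/(1+(7+4*s)*u^2) + (1/12-s/24)/(1+(7-4*s)*u^2) = 1/6*(1+u^2)/(1+14*u^2+u^4) := by
  have hd : (1+(7+4*s)*u^2)*(1+(7-4*s)*u^2) = 1+14*u^2+u^4 := by
    linear_combination (-16*u^4)*hs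
  rw [div_add_div _ _ h1 h2, hd]
  congr 1
  linear_combination (-u^2/3)*hs

lemma pair2m (s y : ℝ) (hs : s^2 = 2) (h1 : 1-(3+2*s)*y^2 ≠ 0) (h2 : 1-(3-2*s)*y^2 ≠ 0) :
    (1/4+s/8)/(1-(3+2*s)*y^2) + (1/4-s/8)/(1-(3-2*s)*y^2) = 1/2*(1-y^2)/(1-6*y^2+y^4) := by
  have hd : (1-(3+2*s)*y^2)*(1-(3-2*s)*y^2) = 1-6*y^2+y^4 := by
    linear_combination (-4*y^4)*hs
  rw [div_add_div _ _ h1 h2, hd]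
  congr 1
  linear_combination (y^2/2)*hs

lemma pair3m (s y : ℝ) (hs : s^2 = 3) (h1 : 1-(7+4*s)*y^2 ≠ 0) (h2 : 1-(7-4*s)*y^2 ≠ 0) :
    (1/12+s/24)/(1-(7+4*s)*y^2) + (1/12-s/24)/(1-(7-4*s)*y^2) = 1/6*(1-y^2)/(1-14*y^2+y^4) := by
  have hd : (1-(7+4*s)*y^2)*(1-(7-4*s)*y^2) = 1-14*y^2+y^4 := by
    linear_combination (-16*y^4)*hs
  rw [div_add_div _ _ h1 h2, hd]
  congr 1
  linear_combination (y^2/3)*hs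

lemma aux_abs (t : ℂ) (d : ℝ) (hd : 0 ≤ d) :
    1 - d * ‖t‖ ^ 2 ≤ ‖(1 + (d:ℂ) * t ^ 2)‖ := by
  have h1 : ‖((d:ℂ) * t ^ 2)‖ = d * ‖t‖ ^ 2 := by
    rw [norm_mul, norm_pow, Complex.norm_real, Real.norm_eq_abs, abs_of_nonneg hd]
  have h2 := norm_add_le (1 + (d:ℂ) * t ^ 2) (-((d:ℂ) * t ^ 2))
  rw [add_neg_cancel_right, norm_neg, h1, norm_one] at h2
  linarith

lemma term_ne (t : ℂ) (d : ℝ) (hd : 0 ≤ d) (h : 0 < 1 - d * ‖t‖ ^ 2) :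
    1 + (d:ℂ) * t ^ 2 ≠ 0 := by
  intro h0
  have h1 := aux_abs t d hd
  rw [h0, norm_zero] at h1
  linarith

lemma term_bound (t : ℂ) (d : ℝ) (hd : 0 ≤ d) (h : 0 < 1 - d * ‖t‖ ^ 2) :
    ‖(t / (1 + (d:ℂ) * t ^ 2))‖ ≤ ‖t‖ / (1 - d * ‖t‖ ^ 2) := by
  rw [norm_div]
  have h1 := aux_abs t d hd
  have h2 : 0 < ‖(1 + (d:ℂ) * t ^ 2)‖ := lt_of_lt_of_le h h1
  rw [div_le_div_iff₀ h2 h]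
  exact mul_le_mul_of_nonneg_left h1 (norm_nonneg t)

lemma coeff_term_bound (t : ℂ) (r d : ℝ) (hr : 0 ≤ r) (hd : 0 ≤ d)
    (h : 0 < 1 - d * ‖t‖ ^ 2) :
    ‖((r:ℂ) * (t / (1 + (d:ℂ) * t ^ 2)))‖ ≤
      r * (‖t‖ / (1 - d * ‖t‖ ^ 2)) := by
  rw [norm_mul, Complex.norm_real, Real.norm_eq_abs, abs_of_nonneg hr]
  exact mul_le_mul_of_nonneg_left (term_bound t d hd h) hr

/-- for complex `t` with `|t| < 2 − √3`,
`6|a₁(t)| + 20|a₃(t)| + 6|a₅(t)| ≤ r(|t|)`. -/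
theorem norm_combination_le_rFun (t : ℂ) (ht : ‖t‖ < 2 - Real.sqrt 3) :
    6 * ‖a1C t‖ + 20 * ‖a3C t‖ + 6 * ‖a5C t‖ ≤
      rFun ‖t‖ := by

  set x := ‖t‖ with hxdef
  set s2 := Real.sqrt 2 with hs2def
  set s3 := Real.sqrt 3 with hs3def
  have hs2 : s2^2 = 2 := Real.sq_sqrt (by norm_num)
  have hs3 : s3^2 = 3 := Real.sq_sqrt (by norm_num)
  have hs2n : 0 ≤ s2 := Real.sqrt_nonneg 2
  have hs3n : 0 ≤ s3 := Real.sqrt_nonneg 3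
  have hs2u : s2 < 3/2 := by nlinarith
  have hs3u : s3 < 7/4 := by nlinarith
  have hs3l : 12/7 < s3 := by nlinarith
  have hx0 : 0 ≤ x := norm_nonneg t
  have hx2 : x^2 < 7 - 4*s3 := by
    nlinarith [mul_pos (by linarith : (0:ℝ) < 2-s3-x) (by linarith : (0:ℝ) < 2-s3+x)]
  have hx17 : x^2 < 1/7 := by linarith
  have hz1 : 0 < 1 - 1*x^2 := by nlinarith
  have hzA : 0 < 1 - (3+2*s2)*x^2 := by
    nlinarith [mul_nonneg (by linarith : (0:ℝ) ≤ 3-2*s2) (sq_nonneg x)]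
  have hzB : 0 < 1 - (3-2*s2)*x^2 := by
    nlinarith [mul_nonneg (by linarith : (0:ℝ) ≤ 2*s2) (sq_nonneg x)]
  have hzC : 0 < 1 - (7+4*s3)*x^2 := by
    nlinarith [mul_pos (by linarith : (0:ℝ) < 7+4*s3) (by linarith : (0:ℝ) < 7-4*s3-x^2)]
  have hzD : 0 < 1 - (7-4*s3)*x^2 := by
    nlinarith [mul_nonneg (by linarith : (0:ℝ) ≤ 4*s3-6) (sq_nonneg x)]
  -- complex side
  have hs2c : ((s2:ℂ))^2 = 2 := by rw [← Complex.ofReal_pow, hs2]; norm_num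
  have hs3c : ((s3:ℂ))^2 = 3 := by rw [← Complex.ofReal_pow, hs3]; norm_num
  have hb1 : (1:ℂ) + ((1:ℝ):ℂ)*t^2 ≠ 0 := term_ne t 1 zero_le_one hz1
  have hA : (1:ℂ) + ((3+2*s2:ℝ):ℂ)*t^2 ≠ 0 := term_ne t (3+2*s2) (by linarith) hzA
  have hB : (1:ℂ) + ((3-2*s2:ℝ):ℂ)*t^2 ≠ 0 := term_ne t (3-2*s2) (by linarith) hzB
  have hC : (1:ℂ) + ((7+4*s3:ℝ):ℂ)*t^2 ≠ 0 := term_ne t (7+4*s3) (by linarith) hzC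
  have hD : (1:ℂ) + ((7-4*s3:ℝ):ℂ)*t^2 ≠ 0 := term_ne t (7-4*s3) (by linarith) hzD
  have hA' : (1:ℂ) + (3+2*(s2:ℂ))*t^2 ≠ 0 := by push_cast at hA; exact hA
  have hB' : (1:ℂ) + (3-2*(s2:ℂ))*t^2 ≠ 0 := by push_cast at hB; exact hB
  have hC' : (1:ℂ) + (7+4*(s3:ℂ))*t^2 ≠ 0 := by push_cast at hC; exact hC
  have hD' : (1:ℂ) + (7-4*(s3:ℂ))*t^2 ≠ 0 := by push_cast at hD; exact hD
  have hb1' : (1:ℂ) + t^2 ≠ 0 := by push_cast at hb1; rwa [one_mul] at hb1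
  have hf2c : (1:ℂ)+6*t^2+t^4 = (1+(3+2*(s2:ℂ))*t^2)*(1+(3-2*(s2:ℂ))*t^2) := by
    linear_combination (4*t^4)*hs2c
  have hf3c : (1:ℂ)+14*t^2+t^4 = (1+(7+4*(s3:ℂ))*t^2)*(1+(7-4*(s3:ℂ))*t^2) := by
    linear_combination (16*t^4)*hs3c
  have hq2 : (1:ℂ)+6*t^2+t^4 ≠ 0 := by rw [hf2c]; exact mul_ne_zero hA' hB'
  have hq3 : (1:ℂ)+14*t^2+t^4 ≠ 0 := by rw [hf3c]; exact mul_ne_zero hC' hD'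
  have base : a1C t = 1/3*(t/(1+1*t^2)) + t*(1/2*(1+t^2)/(1+6*t^2+t^4))
      + t*(1/6*(1+t^2)/(1+14*t^2+t^4)) := by
    unfold a1C
    rw [one_mul]
    generalize hU : (1:ℂ) + t^2 = U at hb1' ⊢
    generalize hP : (1:ℂ)+6*t^2+t^4 = P at hq2 ⊢
    generalize hQ : (1:ℂ)+14*t^2+t^4 = Q at hq3 ⊢
    field_simp
    subst hU hP hQ
    ring
  have p2 := pair2p (s2:ℂ) t hs2c hA' hB'
  have p3 := pair3p (s3:ℂ) t hs3c hC' hD'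
  have e1 : a1C t = ((1/3:ℝ):ℂ)*(t/(1+((1:ℝ):ℂ)*t^2))
      + ((1/4+s2/8:ℝ):ℂ)*(t/(1+((3+2*s2:ℝ):ℂ)*t^2))
      + ((1/4-s2/8:ℝ):ℂ)*(t/(1+((3-2*s2:ℝ):ℂ)*t^2))
      + ((1/12+s3/24:ℝ):ℂ)*(t/(1+((7+4*s3:ℝ):ℂ)*t^2))
      + ((1/12-s3/24:ℝ):ℂ)*(t/(1+((7-4*s3:ℝ):ℂ)*t^2)) := by
    push_cast
    linear_combination base - t*p2 - t*p3
  have e3 : a3C t = (-2:ℂ) * ((t/(1+((1:ℝ):ℂ)*t^2)) * (t/(1+((7+4*s3:ℝ):ℂ)*t^2))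
      * (t/(1+((7-4*s3:ℝ):ℂ)*t^2))) := by
    have hP3 : ((1+t^2)*(1+14*t^2+t^4) : ℂ) =
        (1+((1:ℝ):ℂ)*t^2)*(1+((7+4*s3:ℝ):ℂ)*t^2)*(1+((7-4*s3:ℝ):ℂ)*t^2) := by
      rw [hf3c]; push_cast; ring
    unfold a3C
    rw [hP3, div_mul_div_comm, div_mul_div_comm]
    ring
  have e5 : a5C t = (16:ℂ) * ((t/(1+((1:ℝ):ℂ)*t^2)) * (t/(1+((3+2*s2:ℝ):ℂ)*t^2))
      * (t/(1+((3-2*s2:ℝ):ℂ)*t^2)) * (t/(1+((7+4*s3:ℝ):ℂ)*t^2))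
      * (t/(1+((7-4*s3:ℝ):ℂ)*t^2))) := by
    have hP5 : ((1+t^2)*(1+6*t^2+t^4)*(1+14*t^2+t^4) : ℂ) =
        (1+((1:ℝ):ℂ)*t^2)*(1+((3+2*s2:ℝ):ℂ)*t^2)*(1+((3-2*s2:ℝ):ℂ)*t^2)
          *(1+((7+4*s3:ℝ):ℂ)*t^2)*(1+((7-4*s3:ℝ):ℂ)*t^2) := by
      rw [hf2c, hf3c]; push_cast; ring
    unfold a5C
    rw [hP5, div_mul_div_comm, div_mul_div_comm, div_mul_div_comm, div_mul_div_comm]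
    ring
  -- individual term bounds
  have T1 := term_bound t 1 zero_le_one hz1
  have TA := term_bound t (3+2*s2) (by linarith) hzA
  have TB := term_bound t (3-2*s2) (by linarith) hzB
  have TC := term_bound t (7+4*s3) (by linarith) hzC
  have TD := term_bound t (7-4*s3) (by linarith) hzD
  have n1 : 0 ≤ x/(1-1*x^2) := div_nonneg hx0 (le_of_lt hz1)
  have nA : 0 ≤ x/(1-(3+2*s2)*x^2) := div_nonneg hx0 (le_of_lt hzA)
  have nB : 0 ≤ x/(1-(3-2*s2)*x^2) := div_nonneg hx0 (le_of_lt hzB)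
  have nC : 0 ≤ x/(1-(7+4*s3)*x^2) := div_nonneg hx0 (le_of_lt hzC)
  have nD : 0 ≤ x/(1-(7-4*s3)*x^2) := div_nonneg hx0 (le_of_lt hzD)
  -- bound for a1
  have b1 : ‖(a1C t)‖ ≤ (1/3)*(x/(1-1*x^2))
      + (1/4+s2/8)*(x/(1-(3+2*s2)*x^2)) + (1/4-s2/8)*(x/(1-(3-2*s2)*x^2))
      + (1/12+s3/24)*(x/(1-(7+4*s3)*x^2)) + (1/12-s3/24)*(x/(1-(7-4*s3)*x^2)) := by
    rw [e1]
    have c1 := coeff_term_bound t (1/3) 1 (by norm_num) zero_le_one hz1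
    have cA := coeff_term_bound t (1/4+s2/8) (3+2*s2) (by linarith) (by linarith) hzA
    have cB := coeff_term_bound t (1/4-s2/8) (3-2*s2) (by linarith) (by linarith) hzB
    have cC := coeff_term_bound t (1/12+s3/24) (7+4*s3) (by linarith) (by linarith) hzC
    have cD := coeff_term_bound t (1/12-s3/24) (7-4*s3) (by linarith) (by linarith) hzD
    calc ‖_‖ ≤ _ := norm_add_le _ _
      _ ≤ _ := add_le_add ((norm_add_le _ _).trans
          (add_le_add ((norm_add_le _ _).trans
            (add_le_add ((norm_add_le _ _).trans
              (add_le_add c1 cA)) cB)) cC)) cD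
  -- bound for a3
  have b3 : ‖(a3C t)‖ ≤
      2*((x/(1-1*x^2))*(x/(1-(7+4*s3)*x^2))*(x/(1-(7-4*s3)*x^2))) := by
    rw [e3, norm_mul, norm_mul, norm_mul]
    have hm2 : ‖(-2:ℂ)‖ = 2 := by
      rw [norm_neg]; norm_num
    rw [hm2]
    exact mul_le_mul_of_nonneg_left
      (mul_le_mul (mul_le_mul T1 TC (norm_nonneg _) n1) TD
        (norm_nonneg _) (mul_nonneg n1 nC)) (by norm_num)
  -- bound for a5
  have b5 : ‖(a5C t)‖ ≤
      16*((x/(1-1*x^2))*(x/(1-(3+2*s2)*x^2))*(x/(1-(3-2*s2)*x^2))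
        *(x/(1-(7+4*s3)*x^2))*(x/(1-(7-4*s3)*x^2))) := by
    rw [e5, norm_mul, norm_mul, norm_mul, norm_mul, norm_mul]
    have hm16 : ‖(16:ℂ)‖ = 16 := by norm_num
    rw [hm16]
    exact mul_le_mul_of_nonneg_left
      (mul_le_mul (mul_le_mul (mul_le_mul (mul_le_mul T1 TA (norm_nonneg _) n1) TB
          (norm_nonneg _) (mul_nonneg n1 nA)) TC
        (norm_nonneg _) (mul_nonneg (mul_nonneg n1 nA) nB)) TD
      (norm_nonneg _) (mul_nonneg (mul_nonneg (mul_nonneg n1 nA) nB) nC)) (by norm_num)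
  -- real identities
  have hne1 : (1:ℝ) - 1*x^2 ≠ 0 := ne_of_gt hz1
  have hneA : (1:ℝ) - (3+2*s2)*x^2 ≠ 0 := ne_of_gt hzA
  have hneB : (1:ℝ) - (3-2*s2)*x^2 ≠ 0 := ne_of_gt hzB
  have hneC : (1:ℝ) - (7+4*s3)*x^2 ≠ 0 := ne_of_gt hzC
  have hneD : (1:ℝ) - (7-4*s3)*x^2 ≠ 0 := ne_of_gt hzD
  have hneA' : (1:ℝ) - (3+2*s2)*x^2 ≠ 0 := hneA
  have hr2 : (1:ℝ)-6*x^2+x^4 = (1-(3+2*s2)*x^2)*(1-(3-2*s2)*x^2) := by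
    linear_combination (4*x^4)*hs2
  have hr3 : (1:ℝ)-14*x^2+x^4 = (1-(7+4*s3)*x^2)*(1-(7-4*s3)*x^2) := by
    linear_combination (16*x^4)*hs3
  have hD1 : (0:ℝ) < 1-x^2 := by nlinarith
  have hD2 : (0:ℝ) < 1-6*x^2+x^4 := by rw [hr2]; exact mul_pos hzA hzB
  have hD3 : (0:ℝ) < 1-14*x^2+x^4 := by rw [hr3]; exact mul_pos hzC hzD
  have q2 := pair2m s2 x hs2 hneA hneB
  have q3 := pair3m s3 x hs3 hneC hneD
  have sum1 : (1/3)*(x/(1-1*x^2))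
      + (1/4+s2/8)*(x/(1-(3+2*s2)*x^2)) + (1/4-s2/8)*(x/(1-(3-2*s2)*x^2))
      + (1/12+s3/24)*(x/(1-(7+4*s3)*x^2)) + (1/12-s3/24)*(x/(1-(7-4*s3)*x^2))
      = x*((1/3)/(1-x^2) + 1/2*(1-x^2)/(1-6*x^2+x^4) + 1/6*(1-x^2)/(1-14*x^2+x^4)) := by
    linear_combination x*q2 + x*q3
  have c3 : 2*((x/(1-1*x^2))*(x/(1-(7+4*s3)*x^2))*(x/(1-(7-4*s3)*x^2)))
      = 2*x^3/((1-x^2)*(1-14*x^2+x^4)) := by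
    rw [div_mul_div_comm, div_mul_div_comm]
    rw [show (1-1*x^2)*(1-(7+4*s3)*x^2)*(1-(7-4*s3)*x^2)
        = (1-x^2)*(1-14*x^2+x^4) from by rw [hr3]; ring]
    ring
  have c5 : 16*((x/(1-1*x^2))*(x/(1-(3+2*s2)*x^2))*(x/(1-(3-2*s2)*x^2))
        *(x/(1-(7+4*s3)*x^2))*(x/(1-(7-4*s3)*x^2)))
      = 16*x^5/((1-x^2)*(1-6*x^2+x^4)*(1-14*x^2+x^4)) := by
    rw [div_mul_div_comm, div_mul_div_comm, div_mul_div_comm, div_mul_div_comm]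
    rw [show (1-1*x^2)*(1-(3+2*s2)*x^2)*(1-(3-2*s2)*x^2)*(1-(7+4*s3)*x^2)*(1-(7-4*s3)*x^2)
        = (1-x^2)*(1-6*x^2+x^4)*(1-14*x^2+x^4) from by rw [hr2, hr3]; ring]
    ring
  -- final combination
  have final : 6*(x*((1/3)/(1-x^2) + 1/2*(1-x^2)/(1-6*x^2+x^4) + 1/6*(1-x^2)/(1-14*x^2+x^4)))
      + 20*(2*x^3/((1-x^2)*(1-14*x^2+x^4)))
      + 6*(16*x^5/((1-x^2)*(1-6*x^2+x^4)*(1-14*x^2+x^4))) = rFun x := by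
    unfold rFun
    have h1 := ne_of_gt hD1
    have h2 := ne_of_gt hD2
    have h3 := ne_of_gt hD3
    generalize hU : (1:ℝ) - x^2 = U at h1 ⊢
    generalize hP : (1:ℝ) - 6*x^2+x^4 = P at h2 ⊢
    generalize hQ : (1:ℝ) - 14*x^2+x^4 = Q at h3 ⊢
    field_simp
    subst hU hP hQ
    ring
  calc 6 * ‖(a1C t)‖ + 20 * ‖(a3C t)‖ + 6 * ‖(a5C t)‖
      ≤ 6*((1/3)*(x/(1-1*x^2))
          + (1/4+s2/8)*(x/(1-(3+2*s2)*x^2)) + (1/4-s2/8)*(x/(1-(3-2*s2)*x^2))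
          + (1/12+s3/24)*(x/(1-(7+4*s3)*x^2)) + (1/12-s3/24)*(x/(1-(7-4*s3)*x^2)))
        + 20*(2*((x/(1-1*x^2))*(x/(1-(7+4*s3)*x^2))*(x/(1-(7-4*s3)*x^2))))
        + 6*(16*((x/(1-1*x^2))*(x/(1-(3+2*s2)*x^2))*(x/(1-(3-2*s2)*x^2))
          *(x/(1-(7+4*s3)*x^2))*(x/(1-(7-4*s3)*x^2)))) := by
        have g1 := mul_le_mul_of_nonneg_left b1 (by norm_num : (0:ℝ) ≤ 6)
        have g3 := mul_le_mul_of_nonneg_left b3 (by norm_num : (0:ℝ) ≤ 20)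
        have g5 := mul_le_mul_of_nonneg_left b5 (by norm_num : (0:ℝ) ≤ 6)
        linarith
    _ = rFun x := by rw [sum1, c3, c5, final]
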